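/- For every real a with 0 ≤ a ≤ 1 and every real x ≤ -1, one has (1 + 1/x)^a ≤ 1 + a/(x + (1-a)/2), with equality only if a = 0 or a = 1. -/

import Mathlib

open Real Set

lemma lemA {v : ℝ} (hv : 0 < v) : (1 - v) * Real.exp (2 * v) < 1 + v := by
  set g : ℝ → ℝ := fun v => (1 + v) - (1 - v) * Real.exp (2 * v) with hg
  have hd : ∀ v : ℝ, HasDerivAt g (1 - (1 - 2*v) * Real.exp (2*v)) v := by
    intro v
    have h1 : HasDerivAt (fun v : ℝ => Real.exp (2 * v)) (2 * Real.exp (2*v)) v := by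
      simpa [mul_comm] using ((hasDerivAt_id v).const_mul (2:ℝ)).exp
    have h2 : HasDerivAt (fun v : ℝ => (1 - v) * Real.exp (2 * v))
        ((-1) * Real.exp (2*v) + (1 - v) * (2 * Real.exp (2*v))) v :=
      (((hasDerivAt_id v).const_sub 1)).mul h1
    have h3 : HasDerivAt (fun v : ℝ => (1:ℝ) + v) 1 v := by
      simpa using (hasDerivAt_id v).const_add (1:ℝ)
    have := h3.sub h2
    refine this.congr_deriv ?_
    ring
  have hpos : ∀ w ∈ Set.Ioi (0:ℝ), 0 < deriv g w := by
    intro w hw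
    rw [(hd w).deriv]
    have hw0 : 0 < w := hw
    have : (1 - 2*w) * Real.exp (2*w) < 1 := by
      rcases le_or_gt (1 - 2*w) 0 with h | h
      · calc (1 - 2*w) * Real.exp (2*w) ≤ 0 := mul_nonpos_of_nonpos_of_nonneg h (Real.exp_pos _).le
          _ < 1 := one_pos
      · have h1 : 1 - 2*w < Real.exp (-(2*w)) := by
          have := Real.add_one_lt_exp (x := -(2*w)) (by intro hc; nlinarith)
          linarith
        calc (1 - 2*w) * Real.exp (2*w) < Real.exp (-(2*w)) * Real.exp (2*w) :=
              mul_lt_mul_of_pos_right h1 (Real.exp_pos _)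
          _ = 1 := by rw [← Real.exp_add]; simp
    linarith
  have hmono : StrictMonoOn g (Set.Ici (0:ℝ)) := by
    apply strictMonoOn_of_deriv_pos (convex_Ici 0)
    · exact fun w _ => ((hd w).continuousAt).continuousWithinAt
    · simpa [interior_Ici] using hpos
  have h0 := hmono (Set.self_mem_Ici) (Set.mem_Ici.2 hv.le) hv
  simp only [hg] at h0
  norm_num at h0
  linarith

lemma lemB {u : ℝ} (hu : 1 < u) : 2 * (u - 1) / (u + 1) < Real.log u := by
  have hu1 : (0:ℝ) < u + 1 := by linarith
  set v := (u - 1) / (u + 1) with hv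
  have hv0 : 0 < v := div_pos (by linarith) hu1
  have hv1 : v < 1 := by rw [hv, div_lt_one hu1]; linarith
  have hA := lemA hv0
  have key : Real.exp (2 * v) < u := by
    have h1v : 0 < 1 - v := by linarith
    rw [← lt_div_iff₀' h1v] at hA
    have heq : (1 + v) / (1 - v) = u := by
      rw [hv]
      field_simp
      ring
    linarith [heq ▸ hA]
  rw [show 2 * (u - 1) / (u + 1) = 2 * v by rw [hv]; ring]
  exact (Real.lt_log_iff_exp_lt (by linarith)).2 key

lemma lemC {t a : ℝ} (ht0 : 0 < t) (ht1 : t < 1) (ha0 : 0 < a) (ha1 : a < 1) :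
    t ^ a * ((1 + t) + a * (1 - t)) < (1 + t) - a * (1 - t) := by
  set L := Real.log t with hL
  set C := 1 + t with hC
  set B := 1 - t with hB
  have hLneg : L < 0 := Real.log_neg ht0 ht1
  have hBpos : 0 < B := by rw [hB]; linarith
  have hCpos : 0 < C := by rw [hC]; linarith
  set f : ℝ → ℝ := fun a => Real.exp (a * L) * (C + a * B) + a * B - C with hf
  have hd1 : ∀ a : ℝ, HasDerivAt f (Real.exp (a*L) * (L * (C + a*B) + B) + B) a := by
    intro a
    have h1 : HasDerivAt (fun a : ℝ => Real.exp (a * L)) (L * Real.exp (a*L)) a := by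
      simpa [mul_comm] using ((hasDerivAt_id a).mul_const L).exp
    have h2 : HasDerivAt (fun a : ℝ => C + a * B) B a := by
      simpa using ((hasDerivAt_id a).mul_const B).const_add C
    have h3 := (h1.mul h2).add ((hasDerivAt_id a).mul_const B)
    have h4 := h3.sub_const C
    refine h4.congr_deriv ?_
    ring
  have hderiv : deriv f = fun a => Real.exp (a*L) * (L * (C + a*B) + B) + B := by
    funext a; exact (hd1 a).deriv
  have hd2 : ∀ a : ℝ, HasDerivAt (deriv f) (Real.exp (a*L) * (L * (L*(C + a*B) + 2*B))) a := by
    intro a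
    rw [hderiv]
    have h1 : HasDerivAt (fun a : ℝ => Real.exp (a * L)) (L * Real.exp (a*L)) a := by
      simpa [mul_comm] using ((hasDerivAt_id a).mul_const L).exp
    have h2 : HasDerivAt (fun a : ℝ => L * (C + a * B) + B) (L * B) a := by
      have h2' : HasDerivAt (fun a : ℝ => C + a * B) B a := by
        simpa using ((hasDerivAt_id a).mul_const B).const_add C
      simpa using (h2'.const_mul L).add_const B
    have h3 := (h1.mul h2).add_const B
    refine h3.congr_deriv ?_
    ring
  have hkey : L * C < -2 * B := by
    have hlb := lemB (u := 1/t) (by rw [lt_div_iff₀ ht0]; linarith)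
    rw [Real.log_div one_ne_zero (ne_of_gt ht0), Real.log_one, zero_sub, ← hL] at hlb
    have heq : 2 * (1/t - 1) / (1/t + 1) = 2 * B / C := by
      rw [hB, hC]; field_simp
    rw [heq] at hlb
    have h2 := (div_lt_iff₀ hCpos).1 hlb
    nlinarith
  have hconv : StrictConvexOn ℝ (Set.Icc (0:ℝ) 1) f := by
    apply strictConvexOn_of_deriv2_pos (convex_Icc 0 1)
    · exact (fun a _ => ((hd1 a).continuousAt).continuousWithinAt)
    · intro b hb
      rw [interior_Icc] at hb
      have hit : deriv^[2] f b = Real.exp (b*L) * (L * (L*(C + b*B) + 2*B)) := by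
        simp only [Function.iterate_succ, Function.iterate_zero, Function.comp_apply, id]
        exact (hd2 b).deriv
      rw [hit]
      apply mul_pos (Real.exp_pos _)
      have hb0 : 0 < b := hb.1
      have hbr : L * (C + b*B) + 2*B < 0 := by
        nlinarith [mul_neg_of_pos_of_neg hb0 (mul_neg_of_neg_of_pos hLneg hBpos)]
      exact mul_pos_of_neg_of_neg hLneg hbr
  have h01 : (0:ℝ) ∈ Set.Icc (0:ℝ) 1 := by norm_num
  have h11 : (1:ℝ) ∈ Set.Icc (0:ℝ) 1 := by norm_num
  have hlt := hconv.2 h01 h11 (by norm_num) (by linarith : 0 < 1 - a) ha0 (by ring)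
  have hsm : (1-a) • (0:ℝ) + a • (1:ℝ) = a := by simp
  rw [hsm] at hlt
  have hf0 : f 0 = 0 := by simp [hf]
  have hf1 : f 1 = 0 := by
    simp only [hf, one_mul, ← hL]
    rw [Real.exp_log ht0, hC, hB]
    ring
  rw [hf0, hf1] at hlt
  simp only [smul_eq_mul, mul_zero, add_zero] at hlt
  simp only [hf] at hlt
  have hrpow : t ^ a = Real.exp (a * L) := by
    rw [hL, Real.rpow_def_of_pos ht0, mul_comm]
  rw [hrpow]
  linarith

theorem rpow_ineq_five (a x : ℝ) (ha0 : 0 ≤ a) (ha1 : a ≤ 1) (hx : x ≤ -1) :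
    (1 + 1 / x) ^ a ≤ 1 + a / (x + (1 - a) / 2) ∧
      ((1 + 1 / x) ^ a = 1 + a / (x + (1 - a) / 2) → a = 0 ∨ a = 1) := by
  have hx0 : x < 0 := lt_of_le_of_lt hx (by norm_num)
  rcases eq_or_lt_of_le ha0 with h0 | h0
  · constructor
    · rw [← h0, Real.rpow_zero]; simp
    · exact fun _ => Or.inl h0.symm
  rcases eq_or_lt_of_le ha1 with h1 | h1
  · constructor
    · rw [h1, Real.rpow_one]
      have : x + (1 - 1) / 2 = x := by ring
      simp [this]
    · exact fun _ => Or.inr h1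
  -- 0 < a < 1: strict inequality
  have hden : x + (1 - a) / 2 < 0 := by linarith
  have hstrict : (1 + 1 / x) ^ a < 1 + a / (x + (1 - a) / 2) := by
    rcases eq_or_lt_of_le hx with hxe | hxl
    · -- x = -1, t = 0
      subst hxe
      have hz : (1:ℝ) + 1 / (-1) = 0 := by norm_num
      rw [hz, Real.zero_rpow (ne_of_gt h0)]
      have hdne : (-1:ℝ) + (1 - a) / 2 ≠ 0 := by intro hc; nlinarith
      have hane : (1:ℝ) + a ≠ 0 := by positivity
      have hne2 : (-1:ℝ) - a ≠ 0 := ne_of_lt (by linarith)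
      have heq : 1 + a / (-1 + (1 - a) / 2) = (1 - a) / (1 + a) := by
        field_simp
        linear_combination (-2*a) * mul_inv_cancel₀ hne2
      rw [heq]
      exact div_pos (by linarith) (by linarith)
    · -- x < -1, t ∈ (0,1)
      set t := 1 + 1/x with ht
      have ht0 : 0 < t := by
        rw [ht]
        have : -1 < 1/x := by
          rw [lt_div_iff_of_neg hx0]; linarith
        linarith
      have ht1 : t < 1 := by
        rw [ht]
        have : 1/x < 0 := div_neg_of_pos_of_neg one_pos hx0
        linarith
      have hC := lemC ht0 ht1 h0 h1
      have hCB : 0 < (1 + t) + a * (1 - t) := by nlinarith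
      rw [← lt_div_iff₀ hCB] at hC
      have heq : ((1 + t) - a * (1 - t)) / ((1 + t) + a * (1 - t)) = 1 + a / (x + (1 - a) / 2) := by
        rw [ht]
        have hxne : x ≠ 0 := ne_of_lt hx0
        have hdne : x + (1 - a) / 2 ≠ 0 := ne_of_lt hden
        have h2x : (1:ℝ) + (x*2 - a) ≠ 0 := by intro hc; linarith
        field_simp [h2x]
        linear_combination mul_inv_cancel₀ h2x
      linarith [heq ▸ hC]
  refine ⟨le_of_lt hstrict, fun he => absurd he (ne_of_lt hstrict)⟩
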